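/- arXiv:1804.06021 — 2 statements merged into one kernel-verified Lean document; each statement's English description precedes it below -/
import Mathlib

section
/- Let Γ be a real n×n matrix, let Σ, H, W, Q be real symmetric n×n matrices with Σ and H positive semidefinite and W positive semidefinite, satisfying Σ = ΓΣΓᵀ + W and H = ΓᵀHΓ + Q, and suppose Q ⪰ λ·I for some λ > 0. Then tr(Σ) ≤ ‖H‖·tr(W)/λ, where ‖H‖ is the spectral norm of H. -/
open Matrix

/-- Spectral norm: operator norm induced by the Euclidean norm. -/
noncomputable def specNorm {m n : ℕ} (A : Matrix (Fin m) (Fin n) ℝ) : ℝ :=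
  ‖LinearMap.toContinuousLinearMap (Matrix.toEuclideanLin A)‖

/-- Frobenius norm: square root of the sum of squares of the entries. -/
noncomputable def frobNorm {m n : ℕ} (A : Matrix (Fin m) (Fin n) ℝ) : ℝ :=
  Real.sqrt (∑ i, ∑ j, A i j ^ 2)

lemma trace_nonneg_of_psd {n : ℕ} {A : Matrix (Fin n) (Fin n) ℝ}
    (hA : A.PosSemidef) : 0 ≤ A.trace := by
  rw [Matrix.trace]
  apply Finset.sum_nonneg
  intro i _
  have := hA.dotProduct_mulVec_nonneg (Pi.single i 1)
  simpa [Matrix.mulVec_single, dotProduct, Pi.single_apply] using this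

lemma trace_mul_nonneg_of_psd {n : ℕ} {A B : Matrix (Fin n) (Fin n) ℝ}
    (hA : A.PosSemidef) (hB : B.PosSemidef) : 0 ≤ (A * B).trace := by
  obtain ⟨C, hC⟩ : ∃ C, A = star C * C := by
    open scoped MatrixOrder in exact CStarAlgebra.nonneg_iff_eq_star_mul_self.mp hA.nonneg
  rw [hC, Matrix.mul_assoc, Matrix.trace_mul_comm]
  exact trace_nonneg_of_psd (hB.mul_mul_conjTranspose_same C)

lemma quad_le_specNorm {n : ℕ} {H : Matrix (Fin n) (Fin n) ℝ} (x : Fin n → ℝ) :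
    x ⬝ᵥ H.mulVec x ≤ specNorm H * (x ⬝ᵥ x) := by
  set y : EuclideanSpace ℝ (Fin n) := (WithLp.equiv 2 (Fin n → ℝ)).symm x with hy
  have h1 : x ⬝ᵥ H.mulVec x = inner ℝ y (Matrix.toEuclideanLin H y) := by
    rw [hy, Matrix.toEuclideanLin_apply_piLp_toLp]
    simp [EuclideanSpace.inner_eq_star_dotProduct, dotProduct, mul_comm]
  have h2 : x ⬝ᵥ x = ‖y‖ ^ 2 := by
    rw [← real_inner_self_eq_norm_sq, hy]
    simp [EuclideanSpace.inner_eq_star_dotProduct, dotProduct]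
    rw [EuclideanSpace.norm_sq_eq]
    simp [sq, Real.norm_eq_abs]
  rw [h1, h2]
  calc inner ℝ y (Matrix.toEuclideanLin H y)
      ≤ ‖y‖ * ‖Matrix.toEuclideanLin H y‖ := real_inner_le_norm _ _
    _ ≤ ‖y‖ * (specNorm H * ‖y‖) := by
        apply mul_le_mul_of_nonneg_left _ (norm_nonneg y)
        exact (LinearMap.toContinuousLinearMap (Matrix.toEuclideanLin H)).le_opNorm y
    _ = specNorm H * ‖y‖ ^ 2 := by ring

/-- If `Σ ⪰ 0`, `H ⪰ 0`, `W ⪰ 0` are symmetric, `Σ = ΓΣΓᵀ + W`, `H = ΓᵀHΓ + Q` with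
`Q` symmetric and `Q ⪰ λ•I` for some `λ > 0`, then `tr(Σ) ≤ ‖H‖·tr(W)/λ`. -/
theorem stmt10 {n : ℕ} (Γ S H W Q : Matrix (Fin n) (Fin n) ℝ)
    (hS : S.PosSemidef) (hHpsd : H.PosSemidef) (hW : W.PosSemidef) (hQ : Q.IsHermitian)
    (hlyap : S = Γ * S * Γᵀ + W) (hbell : H = Γᵀ * H * Γ + Q)
    (lam : ℝ) (hlam : 0 < lam)
    (hQlow : (Q - lam • (1 : Matrix (Fin n) (Fin n) ℝ)).PosSemidef) :
    S.trace ≤ specNorm H * W.trace / lam := by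
  -- Step 1: tr(Q S) = tr(H W)
  have hQeq : Q = H - Γᵀ * H * Γ := (sub_eq_of_eq_add' hbell).symm
  have hGSG : Γ * S * Γᵀ = S - W := eq_sub_of_add_eq hlyap.symm
  have key : (Q * S).trace = (H * W).trace := by
    rw [hQeq, Matrix.sub_mul, Matrix.trace_sub]
    have : (Γᵀ * H * Γ * S).trace = (H * (Γ * S * Γᵀ)).trace := by
      calc (Γᵀ * H * Γ * S).trace = (Γᵀ * (H * (Γ * S))).trace := by
            rw [Matrix.mul_assoc, Matrix.mul_assoc]
        _ = ((H * (Γ * S)) * Γᵀ).trace := Matrix.trace_mul_comm _ _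
        _ = (H * (Γ * S * Γᵀ)).trace := by rw [Matrix.mul_assoc, Matrix.mul_assoc]
    rw [this, hGSG, Matrix.mul_sub, Matrix.trace_sub]
    ring
  -- Step 2: lam * tr S ≤ tr(Q S)
  have step2 : lam * S.trace ≤ (Q * S).trace := by
    have h0 := trace_mul_nonneg_of_psd hQlow hS
    rw [Matrix.sub_mul, Matrix.trace_sub, Matrix.smul_mul, Matrix.one_mul,
      Matrix.trace_smul] at h0
    simpa [smul_eq_mul] using sub_nonneg.mp h0
  -- Step 3: tr(H W) ≤ specNorm H * tr W
  have hcI : (specNorm H • (1 : Matrix (Fin n) (Fin n) ℝ) - H).PosSemidef := by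
    refine Matrix.PosSemidef.of_dotProduct_mulVec_nonneg ?_ ?_
    · have hH := hHpsd.1
      simp [Matrix.IsHermitian, Matrix.conjTranspose_sub, Matrix.conjTranspose_smul] at hH ⊢
      exact hH
    · intro x
      have := quad_le_specNorm (H := H) (RCLike.re ∘ x)
      have hx : (RCLike.re ∘ x : Fin n → ℝ) = x := by ext i; simp
      rw [hx] at this
      simp only [Matrix.sub_mulVec, Matrix.smul_mulVec, Matrix.one_mulVec,
        dotProduct_sub, dotProduct_smul]
      simpa [smul_eq_mul, sub_nonneg] using this
  have step3 : (H * W).trace ≤ specNorm H * W.trace := by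
    have h0 := trace_mul_nonneg_of_psd hcI hW
    rw [Matrix.sub_mul, Matrix.trace_sub, Matrix.smul_mul, Matrix.one_mul,
      Matrix.trace_smul] at h0
    simpa [smul_eq_mul] using sub_nonneg.mp h0
  -- combine
  rw [le_div_iff₀ hlam]
  calc S.trace * lam = lam * S.trace := mul_comm _ _
    _ ≤ (Q * S).trace := step2
    _ = (H * W).trace := key
    _ ≤ specNorm H * W.trace := step3
end

section
/- Let X be a real symmetric n×n matrix, Γ a real n×n matrix, ε ≥ 0, C ≥ 0, and 0 ≤ ρ < 1, such that X ⪯ ΓᵀXΓ + ε·I in the Loewner order and ‖Γᵏ‖ ≤ √C · ρᵏ for all k ≥ 0 (spectral norm). Then X ⪯ ε·∑_{k=0}^{∞}(Γᵀ)ᵏΓᵏ, and in particular the largest eigenvalue of X satisfies λ_max(X) ≤ εC/(1 − ρ²). -/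
open Matrix

lemma specNorm_nonneg {m n : ℕ} (A : Matrix (Fin m) (Fin n) ℝ) : 0 ≤ specNorm A :=
  norm_nonneg _

lemma dot_eq_normsq {n : ℕ} (v : Fin n → ℝ) :
    v ⬝ᵥ v = ‖(WithLp.equiv 2 (Fin n → ℝ)).symm v‖ ^ 2 := by
  rw [← real_inner_self_eq_norm_sq, WithLp.equiv_symm_apply, EuclideanSpace.inner_toLp_toLp, star_trivial]

lemma dot_self_nonneg' {n : ℕ} (v : Fin n → ℝ) : 0 ≤ v ⬝ᵥ v :=
  Finset.sum_nonneg fun _ _ => mul_self_nonneg _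

lemma mulVec_norm_le {m n : ℕ} (A : Matrix (Fin m) (Fin n) ℝ) (x : Fin n → ℝ) :
    ‖(WithLp.equiv 2 (Fin m → ℝ)).symm (A *ᵥ x)‖
      ≤ specNorm A * ‖(WithLp.equiv 2 (Fin n → ℝ)).symm x‖ := by
  have := (LinearMap.toContinuousLinearMap (Matrix.toEuclideanLin A)).le_opNorm
    ((WithLp.equiv 2 (Fin n → ℝ)).symm x)
  simpa [specNorm] using this

lemma key1 {m n : ℕ} (A : Matrix (Fin m) (Fin n) ℝ) (x : Fin n → ℝ) :
    (A *ᵥ x) ⬝ᵥ (A *ᵥ x) ≤ specNorm A ^ 2 * (x ⬝ᵥ x) := by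
  rw [dot_eq_normsq, dot_eq_normsq, ← mul_pow]
  exact pow_le_pow_left₀ (norm_nonneg _) (mulVec_norm_le A x) 2

lemma key2 {n : ℕ} (X : Matrix (Fin n) (Fin n) ℝ) (v : Fin n → ℝ) :
    v ⬝ᵥ (X *ᵥ v) ≤ specNorm X * (v ⬝ᵥ v) := by
  have hinner : v ⬝ᵥ (X *ᵥ v) =
      inner ℝ ((WithLp.equiv 2 (Fin n → ℝ)).symm v) ((WithLp.equiv 2 (Fin n → ℝ)).symm (X *ᵥ v)) := by
    rw [WithLp.equiv_symm_apply, EuclideanSpace.inner_toLp_toLp, star_trivial, dotProduct_comm]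
  rw [hinner, dot_eq_normsq]
  calc (inner ℝ ((WithLp.equiv 2 (Fin n → ℝ)).symm v) ((WithLp.equiv 2 (Fin n → ℝ)).symm (X *ᵥ v)) : ℝ)
      ≤ ‖(WithLp.equiv 2 (Fin n → ℝ)).symm v‖ * ‖(WithLp.equiv 2 (Fin n → ℝ)).symm (X *ᵥ v)‖ :=
        real_inner_le_norm _ _
    _ ≤ ‖(WithLp.equiv 2 (Fin n → ℝ)).symm v‖ * (specNorm X * ‖(WithLp.equiv 2 (Fin n → ℝ)).symm v‖) :=
        mul_le_mul_of_nonneg_left (mulVec_norm_le X v) (norm_nonneg _)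
    _ = specNorm X * ‖(WithLp.equiv 2 (Fin n → ℝ)).symm v‖ ^ 2 := by ring

lemma absdot {n : ℕ} (a b : Fin n → ℝ) : |a ⬝ᵥ b| ≤ (a ⬝ᵥ a + b ⬝ᵥ b) / 2 := by
  have h1 : 0 ≤ (a - b) ⬝ᵥ (a - b) := dot_self_nonneg' _
  have h2 : 0 ≤ (a + b) ⬝ᵥ (a + b) := dot_self_nonneg' _
  have e1 : (a - b) ⬝ᵥ (a - b) = a ⬝ᵥ a - a ⬝ᵥ b - a ⬝ᵥ b + b ⬝ᵥ b := by
    simp [sub_dotProduct, dotProduct_sub, dotProduct_comm b a]; ring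
  have e2 : (a + b) ⬝ᵥ (a + b) = a ⬝ᵥ a + a ⬝ᵥ b + a ⬝ᵥ b + b ⬝ᵥ b := by
    simp [add_dotProduct, dotProduct_add, dotProduct_comm b a]; ring
  rw [abs_le]
  constructor <;> nlinarith [h1, h2]

/-- If `X` is symmetric with `X ⪯ ΓᵀXΓ + ε•I` and `‖Γᵏ‖ ≤ √C·ρᵏ` for all `k` with
`0 ≤ ρ < 1`, then `X ⪯ ε·∑_{k=0}^∞ (Γᵀ)ᵏΓᵏ` and `λ_max(X) ≤ εC/(1-ρ²)`. -/
theorem stmt13 {n : ℕ} (X Γ : Matrix (Fin n) (Fin n) ℝ) (hX : X.IsHermitian)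
    (ε C ρ : ℝ) (hε : 0 ≤ ε) (hC : 0 ≤ C) (hρ0 : 0 ≤ ρ) (hρ1 : ρ < 1)
    (hle : (Γᵀ * X * Γ + ε • (1 : Matrix (Fin n) (Fin n) ℝ) - X).PosSemidef)
    (hΓ : ∀ k : ℕ, specNorm (Γ ^ k) ≤ Real.sqrt C * ρ ^ k) :
    Summable (fun k : ℕ => (Γᵀ) ^ k * Γ ^ k) ∧
    (ε • (∑' k : ℕ, (Γᵀ) ^ k * Γ ^ k) - X).PosSemidef ∧
    (⨆ i, hX.eigenvalues i) ≤ ε * C / (1 - ρ ^ 2) := by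
  classical
  set f : ℕ → Matrix (Fin n) (Fin n) ℝ := fun k => (Γᵀ) ^ k * Γ ^ k with hfdef
  have hρ2 : (0:ℝ) ≤ ρ ^ 2 := sq_nonneg ρ
  have hρ2lt : ρ ^ 2 < 1 := by nlinarith
  have h1mρ2 : (0:ℝ) < 1 - ρ ^ 2 := by linarith
  -- quadratic/bilinear form of f k
  have hq2 : ∀ (k : ℕ) (x y : Fin n → ℝ),
      x ⬝ᵥ (f k *ᵥ y) = (Γ ^ k *ᵥ x) ⬝ᵥ (Γ ^ k *ᵥ y) := by
    intro k x y
    simp only [hfdef]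
    rw [← transpose_pow, ← mulVec_mulVec, dotProduct_mulVec, vecMul_transpose]
  have hq : ∀ (k : ℕ) (x : Fin n → ℝ),
      x ⬝ᵥ (f k *ᵥ x) = (Γ ^ k *ᵥ x) ⬝ᵥ (Γ ^ k *ᵥ x) := fun k x => hq2 k x x
  have hqnn : ∀ (k : ℕ) (x : Fin n → ℝ), 0 ≤ x ⬝ᵥ (f k *ᵥ x) := fun k x => by
    rw [hq]; exact dot_self_nonneg' _
  have hspec : ∀ k : ℕ, specNorm (Γ ^ k) ^ 2 ≤ C * (ρ ^ 2) ^ k := by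
    intro k
    calc specNorm (Γ ^ k) ^ 2 ≤ (Real.sqrt C * ρ ^ k) ^ 2 :=
          pow_le_pow_left₀ (specNorm_nonneg _) (hΓ k) 2
      _ = C * (ρ ^ 2) ^ k := by
          rw [mul_pow, Real.sq_sqrt hC, ← pow_mul, ← pow_mul, Nat.mul_comm]
  have hqle : ∀ (k : ℕ) (x : Fin n → ℝ),
      x ⬝ᵥ (f k *ᵥ x) ≤ C * (ρ ^ 2) ^ k * (x ⬝ᵥ x) := by
    intro k x
    rw [hq]
    calc (Γ ^ k *ᵥ x) ⬝ᵥ (Γ ^ k *ᵥ x) ≤ specNorm (Γ ^ k) ^ 2 * (x ⬝ᵥ x) := key1 _ _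
      _ ≤ C * (ρ ^ 2) ^ k * (x ⬝ᵥ x) :=
          mul_le_mul_of_nonneg_right (hspec k) (dot_self_nonneg' x)
  -- entry bounds
  have hsingle : ∀ i : Fin n, (Pi.single i (1:ℝ)) ⬝ᵥ (Pi.single i 1) = 1 := by
    intro i; rw [dotProduct_single]; simp
  have hentry : ∀ (k : ℕ) (i j : Fin n), |f k i j| ≤ C * (ρ ^ 2) ^ k := by
    intro k i j
    have he : f k i j = Pi.single i 1 ⬝ᵥ (f k *ᵥ Pi.single j (1:ℝ)) := by
      rw [mulVec_single, single_dotProduct]; simp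
    rw [he, hq2]
    calc |(Γ ^ k *ᵥ Pi.single i 1) ⬝ᵥ (Γ ^ k *ᵥ Pi.single j 1)|
        ≤ ((Γ ^ k *ᵥ Pi.single i 1) ⬝ᵥ (Γ ^ k *ᵥ Pi.single i 1)
            + (Γ ^ k *ᵥ Pi.single j 1) ⬝ᵥ (Γ ^ k *ᵥ Pi.single j 1)) / 2 := absdot _ _
      _ ≤ (C * (ρ ^ 2) ^ k * 1 + C * (ρ ^ 2) ^ k * 1) / 2 := by
          have hi := hqle k (Pi.single i 1)
          have hj := hqle k (Pi.single j 1)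
          rw [hq, hsingle i] at hi
          rw [hq, hsingle j] at hj
          linarith
      _ = C * (ρ ^ 2) ^ k := by ring
  have hgeo : Summable (fun k : ℕ => C * (ρ ^ 2) ^ k) :=
    (summable_geometric_of_lt_one hρ2 hρ2lt).mul_left C
  have hsum_entry : ∀ i j : Fin n, Summable fun k => f k i j := fun i j =>
    Summable.of_norm_bounded hgeo fun k => by
      simpa [Real.norm_eq_abs] using hentry k i j
  set S : Matrix (Fin n) (Fin n) ℝ := Matrix.of fun i j => ∑' k, f k i j with hSdef
  have hS : HasSum f S :=
    Pi.hasSum.mpr fun i => Pi.hasSum.mpr fun j => (hsum_entry i j).hasSum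
  have hsummable : Summable f := hS.summable
  have htsum : (∑' k, f k) = S := hS.tsum_eq
  -- quadratic form of S as a tsum
  have hgQ : ∀ x : Fin n → ℝ, HasSum (fun k => x ⬝ᵥ (f k *ᵥ x)) (x ⬝ᵥ (S *ᵥ x)) := by
    intro x
    have hcont : Continuous fun M : Matrix (Fin n) (Fin n) ℝ => x ⬝ᵥ (M *ᵥ x) :=
      continuous_const.dotProduct (continuous_id.matrix_mulVec continuous_const)
    exact hS.map (AddMonoidHom.mk' (fun M => x ⬝ᵥ (M *ᵥ x))
      (fun M N => by simp [add_mulVec, dotProduct_add])) hcont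
  -- main inequality  xᵀXx ≤ ε xᵀSx
  have hmain : ∀ x : Fin n → ℝ, x ⬝ᵥ (X *ᵥ x) ≤ ε * (x ⬝ᵥ (S *ᵥ x)) := by
    intro x
    have hQsum := hgQ x
    have hstep : ∀ v : Fin n → ℝ,
        v ⬝ᵥ (X *ᵥ v) ≤ (Γ *ᵥ v) ⬝ᵥ (X *ᵥ (Γ *ᵥ v)) + ε * (v ⬝ᵥ v) := by
      intro v
      have h0 := hle.dotProduct_mulVec_nonneg v
      rw [star_trivial] at h0
      have hGXG : v ⬝ᵥ ((Γᵀ * X * Γ) *ᵥ v) = (Γ *ᵥ v) ⬝ᵥ (X *ᵥ (Γ *ᵥ v)) := by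
        rw [← mulVec_mulVec, ← mulVec_mulVec, dotProduct_mulVec, vecMul_transpose]
      rw [sub_mulVec, add_mulVec, smul_mulVec, one_mulVec, dotProduct_sub,
        dotProduct_add, dotProduct_smul, smul_eq_mul, hGXG] at h0
      linarith
    set a : ℕ → ℝ := fun k => (Γ ^ k *ᵥ x) ⬝ᵥ (X *ᵥ (Γ ^ k *ᵥ x)) with hadef
    have hstepk : ∀ k : ℕ, a k ≤ a (k + 1) + ε * (x ⬝ᵥ (f k *ᵥ x)) := by
      intro k
      have h := hstep (Γ ^ k *ᵥ x)
      have hpow : Γ *ᵥ (Γ ^ k *ᵥ x) = Γ ^ (k + 1) *ᵥ x := by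
        rw [mulVec_mulVec, ← pow_succ']
      rw [hpow, ← hq k x] at h
      exact h
    have hpartial : ∀ N : ℕ,
        a 0 ≤ a N + ε * ∑ k ∈ Finset.range N, x ⬝ᵥ (f k *ᵥ x) := by
      intro N
      induction N with
      | zero => simp
      | succ N ih =>
        rw [Finset.sum_range_succ, mul_add]
        have := hstepk N
        linarith
    have haN : ∀ N : ℕ, a N ≤ specNorm X * C * (x ⬝ᵥ x) * (ρ ^ 2) ^ N := by
      intro N
      calc a N ≤ specNorm X * ((Γ ^ N *ᵥ x) ⬝ᵥ (Γ ^ N *ᵥ x)) := key2 _ _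
        _ ≤ specNorm X * (C * (ρ ^ 2) ^ N * (x ⬝ᵥ x)) := by
            apply mul_le_mul_of_nonneg_left _ (specNorm_nonneg _)
            rw [← hq]; exact hqle N x
        _ = specNorm X * C * (x ⬝ᵥ x) * (ρ ^ 2) ^ N := by ring
    have hparle : ∀ N : ℕ, ∑ k ∈ Finset.range N, x ⬝ᵥ (f k *ᵥ x) ≤ x ⬝ᵥ (S *ᵥ x) := by
      intro N
      have := Summable.sum_le_tsum (Finset.range N) (fun k _ => hqnn k x) hQsum.summable
      rwa [hQsum.tsum_eq] at this
    have hbound : ∀ N : ℕ,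
        a 0 ≤ specNorm X * C * (x ⬝ᵥ x) * (ρ ^ 2) ^ N + ε * (x ⬝ᵥ (S *ᵥ x)) := by
      intro N
      have h1 := hpartial N
      have h2 := haN N
      have h4 : ε * ∑ k ∈ Finset.range N, x ⬝ᵥ (f k *ᵥ x) ≤ ε * (x ⬝ᵥ (S *ᵥ x)) :=
        mul_le_mul_of_nonneg_left (hparle N) hε
      linarith
    have hlim : Filter.Tendsto
        (fun N : ℕ => specNorm X * C * (x ⬝ᵥ x) * (ρ ^ 2) ^ N + ε * (x ⬝ᵥ (S *ᵥ x)))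
        Filter.atTop (nhds (ε * (x ⬝ᵥ (S *ᵥ x)))) := by
      have h0 := tendsto_pow_atTop_nhds_zero_of_lt_one hρ2 hρ2lt
      have := (h0.const_mul (specNorm X * C * (x ⬝ᵥ x))).add_const (ε * (x ⬝ᵥ (S *ᵥ x)))
      simpa using this
    have ha0 : a 0 ≤ ε * (x ⬝ᵥ (S *ᵥ x)) := ge_of_tendsto' hlim hbound
    simpa [hadef, one_mulVec] using ha0
  -- Hermitian-ness of S
  have hfherm : ∀ k : ℕ, (f k).IsHermitian := by
    intro k
    have := (posSemidef_conjTranspose_mul_self (Γ ^ k)).1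
    have hct : (Γ ^ k)ᴴ = (Γᵀ) ^ k := by
      rw [conjTranspose_eq_transpose_of_trivial, transpose_pow]
    rwa [hct] at this
  have hSherm : S.IsHermitian := by
    have h3 := hS.matrix_conjTranspose
    rw [show (fun k => (f k)ᴴ) = f from funext fun k => (hfherm k).eq] at h3
    exact h3.unique hS
  refine ⟨hsummable, ?_, ?_⟩
  · rw [htsum]
    refine PosSemidef.of_dotProduct_mulVec_nonneg ?_ ?_
    · show (ε • S - X)ᴴ = ε • S - X
      rw [conjTranspose_sub, conjTranspose_smul, hSherm.eq, hX.eq, star_trivial]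
    · intro x
      rw [star_trivial]
      have hexp : x ⬝ᵥ ((ε • S - X) *ᵥ x)
          = ε * (x ⬝ᵥ (S *ᵥ x)) - x ⬝ᵥ (X *ᵥ x) := by
        rw [sub_mulVec, smul_mulVec, dotProduct_sub, dotProduct_smul, smul_eq_mul]
      rw [hexp]
      have := hmain x
      linarith
  -- eigenvalue bound
  · have hgeotsum : (∑' k : ℕ, (ρ ^ 2) ^ k) = (1 - ρ ^ 2)⁻¹ :=
      tsum_geometric_of_lt_one hρ2 hρ2lt
    have hQle : ∀ x : Fin n → ℝ,
        x ⬝ᵥ (S *ᵥ x) ≤ C * (x ⬝ᵥ x) * (1 - ρ ^ 2)⁻¹ := by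
      intro x
      have h1 : x ⬝ᵥ (S *ᵥ x) = ∑' k, x ⬝ᵥ (f k *ᵥ x) := (hgQ x).tsum_eq.symm
      rw [h1]
      have h2 : ∀ k : ℕ, x ⬝ᵥ (f k *ᵥ x) ≤ (C * (x ⬝ᵥ x)) * (ρ ^ 2) ^ k := by
        intro k
        calc x ⬝ᵥ (f k *ᵥ x) ≤ C * (ρ ^ 2) ^ k * (x ⬝ᵥ x) := hqle k x
          _ = (C * (x ⬝ᵥ x)) * (ρ ^ 2) ^ k := by ring
      have hsum2 : Summable (fun k : ℕ => (C * (x ⬝ᵥ x)) * (ρ ^ 2) ^ k) :=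
        (summable_geometric_of_lt_one hρ2 hρ2lt).mul_left _
      calc (∑' k, x ⬝ᵥ (f k *ᵥ x)) ≤ ∑' k : ℕ, (C * (x ⬝ᵥ x)) * (ρ ^ 2) ^ k :=
            Summable.tsum_le_tsum h2 (hgQ x).summable hsum2
        _ = (C * (x ⬝ᵥ x)) * (1 - ρ ^ 2)⁻¹ := by rw [tsum_mul_left, hgeotsum]
        _ = C * (x ⬝ᵥ x) * (1 - ρ ^ 2)⁻¹ := by ring
    rcases isEmpty_or_nonempty (Fin n) with he | hne
    · rw [Real.iSup_of_isEmpty]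
      positivity
    · apply ciSup_le
      intro i
      set v : Fin n → ℝ := ⇑(hX.eigenvectorBasis i) with hvdef
      have hvv : v ⬝ᵥ v = 1 := by
        have hnorm : ‖hX.eigenvectorBasis i‖ = 1 := hX.eigenvectorBasis.orthonormal.1 i
        have heq : (WithLp.equiv 2 (Fin n → ℝ)).symm v = hX.eigenvectorBasis i := rfl
        rw [dot_eq_normsq, heq, hnorm, one_pow]
      have hev : X *ᵥ v = hX.eigenvalues i • v := hX.mulVec_eigenvectorBasis i
      have h1 : v ⬝ᵥ (X *ᵥ v) = hX.eigenvalues i := by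
        rw [hev, dotProduct_smul, smul_eq_mul, hvv, mul_one]
      have h2 : ε * (v ⬝ᵥ (S *ᵥ v)) ≤ ε * (C * (1 - ρ ^ 2)⁻¹) := by
        apply mul_le_mul_of_nonneg_left _ hε
        have := hQle v
        rwa [hvv, mul_one] at this
      calc hX.eigenvalues i = v ⬝ᵥ (X *ᵥ v) := h1.symm
        _ ≤ ε * (v ⬝ᵥ (S *ᵥ v)) := hmain v
        _ ≤ ε * (C * (1 - ρ ^ 2)⁻¹) := h2
        _ = ε * C / (1 - ρ ^ 2) := by rw [div_eq_mul_inv]; ring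
end
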